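/- Let d be a natural number that is not a perfect square, m a nonzero integer with |m| < √d, T the minimal period of the continued fraction of √d, p_n/q_n the convergents of √d, and (v_n) the associated sequence. Let S be the set of pairs (x, y) of positive coprime natural numbers with x² − d·y² = m, and for ℓ ∈ ℤ let E_ℓ = { j : 1 ≤ j ≤ T and (−1)^j·v_j = ℓ }. Assume T is odd. Then S is nonempty if and only if E_m ∪ E_{−m} is nonempty, and in that case S equals the union over N ∈ E_m of the sets { (p_{N+2kT−1}, q_{N+2kT−1}) : k ∈ ℕ } together with the union over M ∈ E_{−m} of the sets { (p_{M+(2k+1)T−1}, q_{M+(2k+1)T−1}) : k ∈ ℕ }. -/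

import Mathlib

/-- The complete quotients of a real number `x`:
`cq x 0 = x` and `cq x (n+1) = 1 / (cq x n - ⌊cq x n⌋)`. -/
noncomputable def cq (x : ℝ) : ℕ → ℝ
  | 0 => x
  | n + 1 => (Int.fract (cq x n))⁻¹

/-- The partial quotients of a real number `x`: `pq x n = ⌊cq x n⌋`. -/
noncomputable def pq (x : ℝ) (n : ℕ) : ℤ := ⌊cq x n⌋

namespace CF13

/-- numerators -/
noncomputable def nm (α : ℝ) : ℕ → ℤ
  | 0 => 0
  | 1 => 1
  | n + 2 => pq α n * nm α (n + 1) + nm α n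

/-- denominators -/
noncomputable def dn (α : ℝ) : ℕ → ℤ
  | 0 => 1
  | 1 => 0
  | n + 2 => pq α n * dn α (n + 1) + dn α n

variable {α : ℝ}

theorem cq_irrational (hα : Irrational α) : ∀ n, Irrational (cq α n)
  | 0 => hα
  | n + 1 => by
      have h := cq_irrational hα n
      have : Irrational (Int.fract (cq α n)) := by
        rw [Int.fract]; exact h.sub_intCast _
      simpa [cq] using this.inv

theorem fract_pos (hα : Irrational α) (n : ℕ) : 0 < Int.fract (cq α n) := by
  rcases lt_or_eq_of_le (Int.fract_nonneg (cq α n)) with h | h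
  · exact h
  · exfalso
    have := cq_irrational hα n
    have : Irrational (Int.fract (cq α n)) := by
      rw [Int.fract]; exact this.sub_intCast _
    rw [← h] at this
    exact not_irrational_zero this

theorem one_lt_cq (hα : Irrational α) (n : ℕ) : 1 < cq α (n + 1) := by
  rw [cq]
  rw [one_lt_inv_iff₀]
  exact ⟨fract_pos hα n, Int.fract_lt_one _⟩

theorem one_le_pq (hα : Irrational α) (n : ℕ) : 1 ≤ pq α (n + 1) := by
  have := one_lt_cq hα n
  rw [pq]
  exact Int.le_floor.2 (by exact_mod_cast this.le)

theorem cq_succ_eq (hα : Irrational α) (n : ℕ) :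
    cq α (n + 1) * (cq α n - pq α n) = 1 := by
  have h : cq α (n + 1) = (Int.fract (cq α n))⁻¹ := rfl
  have hne : Int.fract (cq α n) ≠ 0 := ne_of_gt (fract_pos hα n)
  rw [h, pq]
  rw [show cq α n - (⌊cq α n⌋ : ℝ) = Int.fract (cq α n) from rfl]
  exact inv_mul_cancel₀ hne

/-- key identity: α = (x_n p_{n+1} + p_n)/(x_n q_{n+1} + q_n) in cleared form -/
theorem key_identity (hα : Irrational α) :
    ∀ n, α * (cq α n * dn α (n + 1) + dn α n) = cq α n * nm α (n + 1) + nm α n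
  | 0 => by simp [nm, dn, cq]
  | n + 1 => by
      have ih := key_identity hα n
      have hx := cq_succ_eq hα n
      have hnm : nm α (n + 2) = pq α n * nm α (n + 1) + nm α n := rfl
      have hdn : dn α (n + 2) = pq α n * dn α (n + 1) + dn α n := rfl
      rw [hnm, hdn]
      push_cast
      linear_combination (cq α (n + 1)) * ih +
        ((nm α (n + 1) : ℝ) - α * (dn α (n + 1))) * hx

theorem det_eq (α : ℝ) : ∀ n, nm α (n + 1) * dn α n - nm α n * dn α (n + 1) = (-1) ^ n
  | 0 => by simp [nm, dn]
  | n + 1 => by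
      have ih := det_eq α n
      have hnm : nm α (n + 2) = pq α n * nm α (n + 1) + nm α n := rfl
      have hdn : dn α (n + 2) = pq α n * dn α (n + 1) + dn α n := rfl
      rw [hnm, hdn, pow_succ]
      ring_nf
      ring_nf at ih
      linarith [ih]

theorem dn_two (α : ℝ) : dn α 2 = 1 := by
  show pq α 0 * dn α 1 + dn α 0 = 1
  simp [dn]

theorem dn_nonneg (hα : Irrational α) : ∀ n, 0 ≤ dn α n := by
  intro n
  induction n using Nat.strong_induction_on with
  | _ n ih =>
    match n with
    | 0 => simp [dn]
    | 1 => simp [dn]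
    | 2 => rw [dn_two]; norm_num
    | (k+3) =>
      have h1 := ih (k+2) (by omega)
      have h2 := ih (k+1) (by omega)
      have h3 := one_le_pq hα k
      have h : dn α (k+3) = pq α (k+1) * dn α (k+2) + dn α (k+1) := rfl
      rw [h]; nlinarith

theorem one_le_dn (hα : Irrational α) : ∀ n, 1 ≤ dn α (n + 2)
  | 0 => by rw [dn_two]
  | n + 1 => by
      have h1 := one_le_dn hα n
      have h2 := dn_nonneg hα (n + 1)
      have h3 := one_le_pq hα n
      have h : dn α (n+3) = pq α (n+1) * dn α (n+2) + dn α (n+1) := rfl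
      rw [h]; nlinarith

theorem dn_ge_nat (hα : Irrational α) : ∀ n : ℕ, (n : ℤ) ≤ dn α (n + 2) := by
  intro n
  induction n using Nat.strong_induction_on with
  | _ n ih =>
    match n with
    | 0 => rw [dn_two]; norm_num
    | 1 =>
      have := one_le_dn hα 1
      push_cast
      linarith
    | (k+2) =>
      have h1 := ih (k+1) (by omega)
      have h2 := one_le_dn hα k
      have h3 := one_le_pq hα (k+1)
      have h4 := one_le_dn hα (k+1)
      have h : dn α (k+4) = pq α (k+2) * dn α (k+3) + dn α (k+2) := rfl
      rw [h]
      push_cast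
      push_cast at h1
      nlinarith

theorem one_le_nm (hα : Irrational α) (h0 : 1 ≤ pq α 0) : ∀ n, 1 ≤ nm α (n + 1)
  | 0 => le_refl 1
  | n + 1 => by
      have h1 := one_le_nm hα h0 n
      have h : nm α (n+2) = pq α n * nm α (n+1) + nm α n := rfl
      rw [h]
      match n with
      | 0 => simpa [nm] using h0
      | k + 1 =>
        have h2 := one_le_pq hα k
        have h3 : (0:ℤ) ≤ nm α (k+1) := le_trans zero_le_one (one_le_nm hα h0 k)
        nlinarith

/-- error term formula -/
theorem err_formula (hα : Irrational α) (n : ℕ) :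
    ((dn α (n+1) : ℝ) * α - nm α (n+1)) *
      (cq α (n+1) * dn α (n+2) + dn α (n+1)) = (-1)^(n+1) * cq α (n+1) := by
  have ki := key_identity hα (n+1)
  have dt : ((nm α (n+2) : ℝ)) * dn α (n+1) - (nm α (n+1)) * dn α (n+2)
      = (-1)^(n+1) := by exact_mod_cast det_eq α (n+1)
  linear_combination ((dn α (n+1) : ℝ)) * ki + (cq α (n+1)) * dt

theorem denom_pos (hα : Irrational α) (n : ℕ) :
    0 < cq α (n+1) * dn α (n+2) + dn α (n+1) := by
  have h1 := one_lt_cq hα n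
  have h2 := one_le_dn hα n
  have h3 := dn_nonneg hα (n+1)
  have h2' : (1:ℝ) ≤ dn α (n+2) := by exact_mod_cast h2
  have h3' : (0:ℝ) ≤ dn α (n+1) := by exact_mod_cast h3
  nlinarith

/-- sign of error term -/
theorem err_sign (hα : Irrational α) (n : ℕ) :
    0 < (-1)^(n+1) * ((dn α (n+1) : ℝ) * α - nm α (n+1)) := by
  have hf := err_formula hα n
  have hd := denom_pos hα n
  have hx : (0:ℝ) < cq α (n+1) := lt_trans zero_lt_one (one_lt_cq hα n)
  have ht : ((-1:ℝ)^(n+1))^2 = 1 := by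
    rw [← pow_mul, pow_mul']; norm_num
  have key : ((-1)^(n+1) * ((dn α (n+1) : ℝ) * α - nm α (n+1))) *
      (cq α (n+1) * dn α (n+2) + dn α (n+1)) = cq α (n+1) := by
    linear_combination ((-1:ℝ)^(n+1)) * hf + (cq α (n+1)) * ht
  by_contra hcon
  push_neg at hcon
  nlinarith [key]

theorem err_ne_zero (hα : Irrational α) (n : ℕ) :
    (dn α (n+1) : ℝ) * α - nm α (n+1) ≠ 0 := by
  intro h
  have := err_sign hα n
  rw [h, mul_zero] at this
  exact lt_irrefl 0 this

theorem err_abs_mul (hα : Irrational α) (n : ℕ) :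
    |(dn α (n+1) : ℝ) * α - nm α (n+1)| * dn α (n+2) ≤ 1 := by
  have hf := err_formula hα n
  have hd := denom_pos hα n
  have hx : (1:ℝ) < cq α (n+1) := one_lt_cq hα n
  have h2' : (1:ℝ) ≤ dn α (n+2) := by exact_mod_cast one_le_dn hα n
  have h3' : (0:ℝ) ≤ dn α (n+1) := by exact_mod_cast dn_nonneg hα (n+1)
  have habs : |(dn α (n+1) : ℝ) * α - nm α (n+1)| *
      (cq α (n+1) * dn α (n+2) + dn α (n+1)) = cq α (n+1) := by
    have := congrArg abs hf
    rw [abs_mul, abs_of_pos hd] at this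
    rw [this, abs_mul, abs_pow, abs_neg, abs_one, one_pow, one_mul,
      abs_of_pos (lt_trans zero_lt_one hx)]
  set E := |(dn α (n+1) : ℝ) * α - nm α (n+1)| with hE
  have hEnn : 0 ≤ E := abs_nonneg _
  nlinarith

/-- Best approximation: any fraction with denominator below `dn α (n+2)` approximates
`α` no better (in the sense `|qα - p|`) than the convergent `nm (n+1) / dn (n+1)`. -/
theorem best_approx (hα : Irrational α) (n : ℕ) (p q : ℤ) (hq1 : 1 ≤ q)
    (hq2 : q < dn α (n + 2)) :
    |(dn α (n+1) : ℝ) * α - nm α (n+1)| ≤ |(q : ℝ) * α - p| := by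
  set N1 := nm α (n+1); set N2 := nm α (n+2)
  set D1 := dn α (n+1); set D2 := dn α (n+2)
  have hdet : N2 * D1 - N1 * D2 = (-1)^(n+1) := det_eq α (n+1)
  have hs : ((-1:ℤ)^n)^2 = 1 := by rw [← pow_mul, pow_mul']; norm_num
  set μ : ℤ := (-1)^n * (p * D2 - q * N2) with hμ
  set ν : ℤ := (-1)^n * (q * N1 - p * D1) with hν
  have hp : μ * N1 + ν * N2 = p := by
    rw [hμ, hν]
    linear_combination (-((-1:ℤ)^n) * p) * hdet + p * hs
  have hqe : μ * D1 + ν * D2 = q := by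
    rw [hμ, hν]
    linear_combination (-((-1:ℤ)^n) * q) * hdet + q * hs
  set E : ℝ := (D1 : ℝ) * α - N1 with hE
  set F : ℝ := (D2 : ℝ) * α - N2 with hF
  have hsplit : (q : ℝ) * α - p = (μ : ℝ) * E + (ν : ℝ) * F := by
    rw [← hp, ← hqe]; push_cast; ring
  have hD1nn : (0:ℤ) ≤ D1 := dn_nonneg hα (n+1)
  have hD2pos : (1:ℤ) ≤ D2 := one_le_dn hα n
  have habs_mul : ∀ μ' : ℤ, μ' ≠ 0 → |E| ≤ |(μ' : ℝ) * E| := by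
    intro μ' hμ'
    rw [abs_mul]
    have : (1:ℝ) ≤ |(μ' : ℝ)| := by
      rw [← Int.cast_abs]
      exact_mod_cast Int.one_le_abs hμ'
    nlinarith [abs_nonneg E]
  rcases eq_or_ne ν 0 with hν0 | hν0
  · -- ν = 0 : p/q is a multiple of the convergent
    have hqμ : q = μ * D1 := by rw [← hqe, hν0]; ring
    have hμ0 : μ ≠ 0 := by intro h0; rw [h0, zero_mul] at hqμ; omega
    have : (q : ℝ) * α - p = (μ : ℝ) * E := by rw [hsplit, hν0]; push_cast; ring
    rw [this]
    exact habs_mul μ hμ0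
  rcases eq_or_ne μ 0 with hμ0 | hμ0
  · exfalso
    have hqν : q = ν * D2 := by rw [← hqe, hμ0]; ring
    rcases lt_or_gt_of_ne hν0 with h | h
    · nlinarith
    · nlinarith
  -- both nonzero: opposite signs
  have hopp : μ * ν < 0 := by
    rcases lt_or_gt_of_ne hμ0 with h1 | h1 <;> rcases lt_or_gt_of_ne hν0 with h2 | h2
    · exfalso; nlinarith
    · nlinarith
    · nlinarith
    · exfalso; nlinarith
  have hEF : E * F < 0 := by
    have h1 := err_sign hα n
    have h2 := err_sign hα (n+1)
    have hprod := mul_pos h1 h2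
    have hpow : ((-1:ℝ)^(n+1)) * ((-1)^(n+1+1)) = -1 := by
      have h2 : ((-1:ℝ)^(n+1))^2 = 1 := by rw [← pow_mul, pow_mul']; norm_num
      rw [pow_succ (-1:ℝ) (n+1)]; linear_combination (-1:ℝ) * h2
    rw [← hE] at h1
    rw [← hF] at h2
    nlinarith [mul_pos h1 h2]
  have hprod2 : ((μ:ℝ) * E) * ((ν:ℝ) * F) > 0 := by
    have : ((μ:ℝ) * ν) * (E * F) > 0 := by
      apply mul_pos_of_neg_of_neg
      · exact_mod_cast Int.cast_lt_zero.mpr hopp |>.trans_le le_rfl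
      · exact hEF
    nlinarith [this]
  rw [hsplit]
  rcases mul_pos_iff.mp hprod2 with ⟨h1, h2⟩ | ⟨h1, h2⟩
  · rw [abs_of_pos (by linarith : (0:ℝ) < (μ:ℝ) * E + (ν:ℝ) * F)]
    calc |E| ≤ |(μ:ℝ) * E| := habs_mul μ hμ0
      _ = (μ:ℝ) * E := abs_of_pos h1
      _ ≤ (μ:ℝ) * E + (ν:ℝ) * F := by linarith
  · rw [abs_of_neg (by linarith : (μ:ℝ) * E + (ν:ℝ) * F < 0)]
    calc |E| ≤ |(μ:ℝ) * E| := habs_mul μ hμ0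
      _ = -((μ:ℝ) * E) := abs_of_neg h1
      _ ≤ -((μ:ℝ) * E + (ν:ℝ) * F) := by linarith

/-- **Legendre's theorem**: a good rational approximation is a convergent. -/
theorem legendre (hα : Irrational α) (p q : ℤ) (hq1 : 1 ≤ q) (hcop : IsCoprime p q)
    (happ : |α - (p : ℝ) / q| < 1 / (2 * (q : ℝ) ^ 2)) :
    ∃ n : ℕ, 1 ≤ n ∧ p = nm α (n + 1) ∧ q = dn α (n + 1) := by
  classical
  have hqR : (0:ℝ) < (q : ℝ) := by exact_mod_cast hq1.trans_lt' zero_lt_one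
  have hex : ∃ n : ℕ, q < dn α (n + 2) := by
    refine ⟨q.toNat + 1, ?_⟩
    have h1 := dn_ge_nat hα (q.toNat + 1)
    have h2 : ((q.toNat : ℤ)) = q := Int.toNat_of_nonneg (by omega)
    push_cast at h1
    omega
  set N := Nat.find hex with hN
  have hNlt : q < dn α (N + 2) := Nat.find_spec hex
  have hN1 : 1 ≤ N := by
    by_contra h
    have h0 : N = 0 := by omega
    have := hNlt
    rw [h0, dn_two] at this
    omega
  have hNle : dn α (N + 1) ≤ q := by
    have := Nat.find_min hex (show N - 1 < N by omega)
    have hrw : N - 1 + 2 = N + 1 := by omega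
    rw [hrw] at this
    omega
  -- the key approximation bound
  have hqap : |(q:ℝ) * α - p| < 1 / (2 * q) := by
    have : |(q:ℝ) * α - p| = (q:ℝ) * |α - (p:ℝ)/q| := by
      rw [← abs_of_pos hqR, ← abs_mul]
      congr 1
      rw [abs_of_pos hqR]
      field_simp
    rw [this]
    calc (q:ℝ) * |α - (p:ℝ)/q| < (q:ℝ) * (1 / (2 * (q:ℝ)^2)) := by
          exact (mul_lt_mul_iff_right₀ hqR).mpr happ
      _ = 1 / (2 * q) := by field_simp
  by_cases hcase : p = nm α (N + 1) ∧ q = dn α (N + 1)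
  · exact ⟨N, hN1, hcase.1, hcase.2⟩
  exfalso
  -- then p * dn - q * nm ≠ 0
  have hne : p * dn α (N + 1) - q * nm α (N + 1) ≠ 0 := by
    intro h0
    apply hcase
    have hD1pos : 0 < dn α (N + 1) := by
      have := one_le_dn hα (N - 1)
      have hrw : N - 1 + 2 = N + 1 := by omega
      rw [hrw] at this
      omega
    have hdvd : q ∣ dn α (N + 1) := by
      have h1 : q ∣ p * dn α (N + 1) := ⟨nm α (N + 1), by linarith⟩
      exact hcop.symm.dvd_of_dvd_mul_left h1
    have hqD : q = dn α (N + 1) :=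
      le_antisymm (Int.le_of_dvd hD1pos hdvd) hNle
    refine ⟨?_, hqD⟩
    have : q * p = q * nm α (N + 1) := by rw [hqD] at h0 ⊢; linarith
    exact mul_left_cancel₀ (by omega) this
  -- contradiction via the size estimate
  have hE := best_approx hα N p q hq1 hNlt
  have h1 : (1:ℝ) ≤ |((p * dn α (N+1) - q * nm α (N+1) : ℤ) : ℝ)| := by
    rw [← Int.cast_abs]
    exact_mod_cast Int.one_le_abs hne
  have hD1nnR : (0:ℝ) ≤ (dn α (N+1) : ℝ) := by exact_mod_cast dn_nonneg hα (N+1)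
  have hD1leq : ((dn α (N+1) : ℝ)) ≤ (q:ℝ) := by exact_mod_cast hNle
  have hid : ((p * dn α (N+1) - q * nm α (N+1) : ℤ) : ℝ)
      = (dn α (N+1) : ℝ) * ((p:ℝ) - (q:ℝ) * α)
        + (q:ℝ) * ((dn α (N+1) : ℝ) * α - nm α (N+1)) := by push_cast; ring
  have e5 : |((p * dn α (N+1) - q * nm α (N+1) : ℤ) : ℝ)|
      ≤ (dn α (N+1) : ℝ) * |(q:ℝ) * α - p|
        + (q:ℝ) * |(dn α (N+1) : ℝ) * α - nm α (N+1)| := by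
    rw [hid]
    refine (abs_add_le _ _).trans ?_
    rw [abs_mul, abs_mul, abs_of_nonneg hD1nnR, abs_of_pos hqR, abs_sub_comm]
  have e1 : (dn α (N+1):ℝ) * |(q:ℝ)*α - p| ≤ (q:ℝ) * |(q:ℝ)*α - p| :=
    mul_le_mul_of_nonneg_right hD1leq (abs_nonneg _)
  have e2 : (q:ℝ) * |(dn α (N+1) : ℝ) * α - nm α (N+1)| ≤ (q:ℝ) * |(q:ℝ)*α - p| :=
    mul_le_mul_of_nonneg_left hE (le_of_lt hqR)
  have e3 : (q:ℝ) * |(q:ℝ)*α - p| < (q:ℝ) * (1/(2*(q:ℝ))) :=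
    (mul_lt_mul_iff_right₀ hqR).mpr hqap
  have e4 : (q:ℝ) * (1/(2*(q:ℝ))) = 1/2 := by field_simp
  linarith

theorem nm_dn_congr {β : ℝ} (h : ∀ k, pq α k = pq β k) :
    ∀ n, nm α n = nm β n ∧ dn α n = dn β n := by
  intro n
  induction n using Nat.strong_induction_on with
  | _ n ih =>
    match n with
    | 0 => exact ⟨rfl, rfl⟩
    | 1 => exact ⟨rfl, rfl⟩
    | (k+2) =>
      have h1 := ih (k+1) (by omega)
      have h2 := ih k (by omega)
      constructor
      · show pq α k * nm α (k+1) + nm α k = pq β k * nm β (k+1) + nm β k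
        rw [h k, h1.1, h2.1]
      · show pq α k * dn α (k+1) + dn α k = pq β k * dn β (k+1) + dn β k
        rw [h k, h1.2, h2.2]

/-- An irrational number is determined by its partial quotients. -/
theorem eq_of_pq_eq {β : ℝ} (hα : Irrational α) (hβ : Irrational β)
    (h : ∀ k, pq α k = pq β k) : α = β := by
  have key : ∀ n : ℕ, |α - β| * n ≤ 2 := by
    intro n
    have hcong := nm_dn_congr h
    have ea := err_abs_mul hα (n+1)
    have eb := err_abs_mul hβ (n+1)
    rw [← (hcong (n+2)).1, ← (hcong (n+2)).2, ← (hcong (n+3)).2] at eb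
    have hD1 : (1:ℝ) ≤ dn α (n+2) := by exact_mod_cast one_le_dn hα n
    have hD2n : ((n:ℝ)+1) ≤ dn α (n+3) := by exact_mod_cast dn_ge_nat hα (n+1)
    have hdiff : (dn α (n+2) : ℝ) * (α - β)
        = ((dn α (n+2):ℝ) * α - nm α (n+2)) - ((dn α (n+2):ℝ) * β - nm α (n+2)) := by
      ring
    have habs : |(dn α (n+2) : ℝ)| * |α - β| * dn α (n+3) ≤ 2 := by
      rw [← abs_mul, hdiff]
      have := abs_sub (((dn α (n+2):ℝ)) * α - nm α (n+2)) (((dn α (n+2):ℝ)) * β - nm α (n+2))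
      have hD3 : (0:ℝ) ≤ dn α (n+3) := by
        exact_mod_cast dn_nonneg hα (n+3)
      nlinarith [abs_nonneg (((dn α (n+2):ℝ)) * α - nm α (n+2)),
        abs_nonneg (((dn α (n+2):ℝ)) * β - nm α (n+2))]
    rw [abs_of_nonneg (by linarith : (0:ℝ) ≤ (dn α (n+2):ℝ))] at habs
    have : |α - β| * n ≤ |α - β| * dn α (n+3) := by
      have : ((n:ℝ)) ≤ dn α (n+3) := by linarith
      exact mul_le_mul_of_nonneg_left this (abs_nonneg _)
    nlinarith [abs_nonneg (α - β), mul_le_mul_of_nonneg_right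
      (one_le_two.trans_eq rfl) (le_refl (0:ℝ))]
  by_contra hne
  have hpos : 0 < |α - β| := abs_pos.mpr (sub_ne_zero.mpr hne)
  obtain ⟨n, hn⟩ := exists_nat_gt (2 / |α - β|)
  have := key n
  have : (2 / |α - β|) < n := hn
  have h2 : 2 < |α - β| * n := by
    rw [div_lt_iff₀ hpos] at this
    linarith [this]
  linarith [key n]

theorem cq_shift (α : ℝ) (j : ℕ) : ∀ k, cq α (j + k) = cq (cq α j) k
  | 0 => rfl
  | k + 1 => by
      show (Int.fract (cq α (j + k)))⁻¹ = (Int.fract (cq (cq α j) k))⁻¹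
      rw [cq_shift α j k]

theorem pq_shift (α : ℝ) (j k : ℕ) : pq α (j + k) = pq (cq α j) k := by
  rw [pq, pq, cq_shift]

end CF13

set_option maxHeartbeats 1000000 in
/-- Theorem 14, case `T` odd: description of the coprime positive
solutions of `x² - d·y² = m` (`|m| < √d`).  `P (n+2) = p_n`, `Q (n+2) = q_n`, so
`p_{j-1} = P (j+1)`. -/
theorem stmt13 (d : ℕ) (hd : ¬ IsSquare d)
    (m : ℤ) (hm : m ≠ 0) (hmd : |(m : ℝ)| < Real.sqrt d)
    (a a' : ℕ → ℤ) (ha : ∀ n, a n = pq (Real.sqrt d) n)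
    (ha'0 : a' 0 = 2 * a 0) (ha' : ∀ n, 1 ≤ n → a' n = a n)
    (u v : ℕ → ℤ) (hu0 : u 0 = a 0) (hv0 : v 0 = 1)
    (hupos : ∀ n, 0 < u n) (hvpos : ∀ n, 0 < v n)
    (hu : ∀ n, u (n + 1) = a' n * v n - u n)
    (hv : ∀ n, v n * v (n + 1) = (d : ℤ) - (u (n + 1)) ^ 2)
    (P Q : ℕ → ℤ)
    (hP0 : P 0 = 0) (hP1 : P 1 = 1) (hQ0 : Q 0 = 1) (hQ1 : Q 1 = 0)
    (hP : ∀ n, P (n + 2) = a n * P (n + 1) + P n)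
    (hQ : ∀ n, Q (n + 2) = a n * Q (n + 1) + Q n)
    (T : ℕ) (hT : 1 ≤ T)
    (hper : ∀ n, 1 ≤ n → pq (Real.sqrt d) (n + T) = pq (Real.sqrt d) n)
    (hmin : ∀ T', 1 ≤ T' →
      (∀ n, 1 ≤ n → pq (Real.sqrt d) (n + T') = pq (Real.sqrt d) n) → T ≤ T')
    (hTodd : Odd T) :
    ((∃ x y : ℕ, 0 < x ∧ 0 < y ∧ Nat.Coprime x y ∧
        (x : ℤ) ^ 2 - (d : ℤ) * (y : ℤ) ^ 2 = m) ↔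
      (∃ j, 1 ≤ j ∧ j ≤ T ∧
        ((-1 : ℤ) ^ j * v j = m ∨ (-1 : ℤ) ^ j * v j = -m))) ∧
    ((∃ j, 1 ≤ j ∧ j ≤ T ∧
        ((-1 : ℤ) ^ j * v j = m ∨ (-1 : ℤ) ^ j * v j = -m)) →
      ∀ x y : ℕ,
        (0 < x ∧ 0 < y ∧ Nat.Coprime x y ∧
          (x : ℤ) ^ 2 - (d : ℤ) * (y : ℤ) ^ 2 = m) ↔
        ((∃ N k : ℕ, 1 ≤ N ∧ N ≤ T ∧ (-1 : ℤ) ^ N * v N = m ∧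
            (x : ℤ) = P (N + 2 * k * T + 1) ∧ (y : ℤ) = Q (N + 2 * k * T + 1)) ∨
         (∃ M k : ℕ, 1 ≤ M ∧ M ≤ T ∧ (-1 : ℤ) ^ M * v M = -m ∧
            (x : ℤ) = P (M + (2 * k + 1) * T + 1) ∧
            (y : ℤ) = Q (M + (2 * k + 1) * T + 1)))) := by
  classical
  set α := Real.sqrt d with hα
  -- basic facts
  have hd2 : 2 ≤ d := by
    by_contra h
    interval_cases d
    · exact hd ⟨0, rfl⟩
    · exact hd ⟨1, rfl⟩
  have hirr : Irrational α := irrational_sqrt_natCast_iff.mpr hd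
  have hs2 : α ^ 2 = (d : ℝ) := Real.sq_sqrt (Nat.cast_nonneg d)
  have hα1 : 1 < α := by
    rw [hα]
    rw [show (1:ℝ) = Real.sqrt 1 from (Real.sqrt_one).symm]
    apply Real.sqrt_lt_sqrt (by norm_num)
    exact_mod_cast hd2.trans_lt' one_lt_two
  have ha0 : 1 ≤ a 0 := by
    rw [ha 0]
    exact Int.le_floor.mpr (by exact_mod_cast hα1.le)
  -- convergents agree with the generic ones
  have hPQ : ∀ n, P n = CF13.nm α n ∧ Q n = CF13.dn α n := by
    intro n
    induction n using Nat.strong_induction_on with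
    | _ n ih =>
      match n with
      | 0 => exact ⟨hP0, hQ0⟩
      | 1 => exact ⟨hP1, hQ1⟩
      | (k+2) =>
        have h1 := ih (k+1) (by omega)
        have h2 := ih k (by omega)
        constructor
        · rw [hP k, show CF13.nm α (k+2) = pq α k * CF13.nm α (k+1) + CF13.nm α k from rfl,
            h1.1, h2.1, ha k]
        · rw [hQ k, show CF13.dn α (k+2) = pq α k * CF13.dn α (k+1) + CF13.dn α k from rfl,
            h1.2, h2.2, ha k]
  -- complete quotients in terms of u, v
  have hvne : ∀ n, ((v n : ℤ) : ℝ) ≠ 0 := by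
    intro n
    exact Int.cast_ne_zero.mpr (by have := hvpos n; omega)
  have hcq : ∀ n, 1 ≤ n → cq α n = ((u n : ℝ) + α) / (v n : ℝ) := by
    intro n hn
    induction n, hn using Nat.le_induction with
    | base =>
      have hu1 : u 1 = a 0 := by rw [hu 0, ha'0, hv0, hu0]; ring
      have hv1 : v 1 = (d:ℤ) - (a 0)^2 := by
        have h0 := hv 0
        rw [hv0, one_mul, hu1] at h0
        linarith
      have hfl : a 0 = ⌊α⌋ := ha 0
      have hne : α - ((a 0 : ℤ) : ℝ) ≠ 0 := (hirr.sub_intCast _).ne_zero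
      have hdne : (((d:ℤ) - (a 0)^2 : ℤ) : ℝ) ≠ 0 := by rw [← hv1]; exact hvne 1
      have key : (α - ((a 0 : ℤ):ℝ))⁻¹
          = (((a 0 : ℤ):ℝ) + α) / ((((d:ℤ) - (a 0)^2 : ℤ)) : ℝ) := by
        rw [eq_div_iff hdne, inv_mul_eq_div, div_eq_iff hne]
        push_cast
        linear_combination -hs2
      show (Int.fract (cq α 0))⁻¹ = ((u 1 : ℝ) + α) / (v 1 : ℝ)
      rw [show cq α 0 = α from rfl, Int.fract, hu1, hv1,
        show ((⌊α⌋ : ℤ):ℝ) = ((a 0 : ℤ):ℝ) from by rw [hfl], key]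
    | succ n hn ih =>
      have hun1 : u (n+1) = a n * v n - u n := by rw [hu n, ha' n hn]
      have hαu : α - ((u (n+1) : ℤ):ℝ) ≠ 0 := (hirr.sub_intCast _).ne_zero
      show (Int.fract (cq α n))⁻¹ = ((u (n+1) : ℝ) + α) / (v (n+1) : ℝ)
      rw [Int.fract,
        show ((⌊cq α n⌋ : ℤ):ℝ) = ((a n : ℤ):ℝ) from by rw [ha n]; rfl, ih]
      have h1 : ((u n : ℝ) + α)/(v n : ℝ) - ((a n : ℤ):ℝ)
          = (α - ((u (n+1):ℤ):ℝ))/(v n : ℝ) := by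
        rw [hun1]
        push_cast
        field_simp [hvne n]
        ring
      rw [h1, inv_div, div_eq_div_iff hαu (hvne (n+1))]
      have hvR : ((v n : ℤ):ℝ) * ((v (n+1) : ℤ):ℝ)
          = ((d:ℕ):ℝ) - ((u (n+1) : ℤ):ℝ)^2 := by exact_mod_cast hv n
      linear_combination hvR - hs2
  -- Pell-type identity
  have hPell : ∀ n, P (n+1)^2 - (d:ℤ) * Q (n+1)^2 = (-1)^n * v n := by
    intro n
    cases n with
    | zero => rw [hP1, hQ1, hv0]; ring
    | succ n =>
      set j := n + 1 with hj
      have hn : 1 ≤ j := by omega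
      have ki := CF13.key_identity hirr j
      rw [← (hPQ (j+1)).1, ← (hPQ (j+1)).2, ← (hPQ j).1, ← (hPQ j).2] at ki
      rw [hcq j hn] at ki
      have hAB : α * (((u j:ℝ) * Q (j+1) + (v j:ℝ) * Q j) - P (j+1))
          = ((u j:ℝ) * P (j+1) + (v j:ℝ) * P j) - (d:ℝ) * Q (j+1) := by
        field_simp [hvne j] at ki
        linear_combination ki - ((Q (j+1) : ℤ):ℝ) * hs2
      set A : ℤ := u j * Q (j+1) + v j * Q j - P (j+1) with hA
      set B : ℤ := u j * P (j+1) + v j * P j - d * Q (j+1) with hB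
      have hABz : α * (A:ℝ) = (B:ℝ) := by
        rw [hA, hB]; push_cast; linear_combination hAB
      have hA0 : A = 0 := by
        by_contra h0
        have hne0 : ((A:ℤ):ℝ) ≠ 0 := Int.cast_ne_zero.mpr h0
        have : α = (B:ℝ)/(A:ℝ) := by rw [eq_div_iff hne0]; exact hABz
        exact (irrational_iff_ne_rational α).mp hirr B A h0 this
      have hB0 : B = 0 := by
        have hzero : (B:ℝ) = 0 := by rw [← hABz, hA0]; simp
        exact_mod_cast hzero
      have hdet : P (j+1) * Q j - P j * Q (j+1) = (-1)^j := by
        rw [(hPQ (j+1)).1, (hPQ (j+1)).2, (hPQ j).1, (hPQ j).2]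
        exact CF13.det_eq α j
      have hA0' : u j * Q (j+1) + v j * Q j - P (j+1) = 0 := hA0
      have hB0' : u j * P (j+1) + v j * P j - (d:ℤ) * Q (j+1) = 0 := hB0
      linear_combination (-(P (j+1))) * hA0' + (Q (j+1)) * hB0' + (v j) * hdet
  -- periodicity of v
  have hcqper : ∀ n, 1 ≤ n → cq α (n + T) = cq α n := by
    intro n hn
    apply CF13.eq_of_pq_eq (CF13.cq_irrational hirr _) (CF13.cq_irrational hirr _)
    intro k
    rw [← CF13.pq_shift, ← CF13.pq_shift]
    have h1 : n + T + k = (n + k) + T := by ring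
    rw [h1, hper (n+k) (by omega)]
  have hvper : ∀ n, 1 ≤ n → v (n + T) = v n := by
    intro n hn
    have h := hcqper n hn
    rw [hcq (n+T) (by omega), hcq n hn] at h
    rw [div_eq_div_iff (hvne _) (hvne _)] at h
    have key : α * (((v n : ℤ) : ℝ) - ((v (n+T) : ℤ) : ℝ))
        = ((u n * v (n+T) - u (n+T) * v n : ℤ) : ℝ) := by
      push_cast
      linear_combination h
    have hz : (v n : ℤ) - v (n+T) = 0 := by
      by_contra h0
      have hne0 : ((v n - v (n+T) : ℤ):ℝ) ≠ 0 := Int.cast_ne_zero.mpr (by omega)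
      have : α = ((u n * v (n+T) - u (n+T) * v n : ℤ):ℝ) / ((v n - v (n+T) : ℤ):ℝ) := by
        rw [eq_div_iff hne0]
        push_cast
        push_cast at key
        linear_combination key
      exact (irrational_iff_ne_rational α).mp hirr _ _ h0 this
    omega
  have hvperk : ∀ (k n : ℕ), 1 ≤ n → v (n + k*T) = v n := by
    intro k
    induction k with
    | zero => intro n hn; simp
    | succ k ihk =>
      intro n hn
      have : n + (k+1)*T = (n + k*T) + T := by ring
      rw [this, hvper (n + k*T) (by omega), ihk n hn]
  -- positivity and coprimality of convergents
  have hQpos : ∀ n, 1 ≤ n → 1 ≤ Q (n+1) := by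
    intro n hn
    rw [(hPQ (n+1)).2]
    have := CF13.one_le_dn hirr (n-1)
    have hr : n - 1 + 2 = n + 1 := by omega
    rwa [hr] at this
  have hPpos : ∀ n, 1 ≤ P (n+1) := by
    intro n
    rw [(hPQ (n+1)).1]
    exact CF13.one_le_nm hirr (by rw [← ha 0]; exact ha0) n
  have hcopr : ∀ n, IsCoprime (P (n+1)) (Q (n+1)) := by
    intro n
    have hdet : P (n+1) * Q n - P n * Q (n+1) = (-1)^n := by
      rw [(hPQ (n+1)).1, (hPQ (n+1)).2, (hPQ n).1, (hPQ n).2]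
      exact CF13.det_eq α n
    have hs : ((-1:ℤ)^n)^2 = 1 := by rw [← pow_mul, pow_mul']; norm_num
    exact ⟨(-1)^n * Q n, -((-1)^n * P n), by linear_combination ((-1:ℤ)^n) * hdet + hs⟩
  -- every solution is a convergent
  have hforward : ∀ x y : ℕ, 0 < x → 0 < y → Nat.Coprime x y →
      (x:ℤ)^2 - (d:ℤ)*(y:ℤ)^2 = m →
      ∃ j, 1 ≤ j ∧ (x:ℤ) = P (j+1) ∧ (y:ℤ) = Q (j+1) ∧ (-1:ℤ)^j * v j = m := by
    have hαpos : 0 < α := lt_trans zero_lt_one hα1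
    have hirr' : Irrational α⁻¹ := hirr.inv
    have hcq1 : cq α⁻¹ 1 = α := by
      show (Int.fract (cq α⁻¹ 0))⁻¹ = α
      rw [show cq α⁻¹ 0 = α⁻¹ from rfl,
        Int.fract_eq_self.mpr ⟨le_of_lt (inv_pos.mpr hαpos), inv_lt_one_of_one_lt₀ hα1⟩,
        inv_inv]
    have hpq0' : pq α⁻¹ 0 = 0 := by
      rw [pq, show cq α⁻¹ 0 = α⁻¹ from rfl]
      exact Int.floor_eq_zero_iff.mpr
        ⟨le_of_lt (inv_pos.mpr hαpos), inv_lt_one_of_one_lt₀ hα1⟩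
    have hpq' : ∀ k, pq α⁻¹ (k+1) = pq α k := by
      intro k
      rw [show k + 1 = 1 + k by ring, CF13.pq_shift α⁻¹ 1 k, hcq1]
    have hswap : ∀ k, CF13.nm α⁻¹ (k+1) = Q k ∧ CF13.dn α⁻¹ (k+1) = P k := by
      intro k
      induction k using Nat.strong_induction_on with
      | _ k ih =>
        match k with
        | 0 =>
          constructor
          · rw [hQ0]; rfl
          · rw [hP0]; rfl
        | 1 =>
          constructor
          · show pq α⁻¹ 0 * CF13.nm α⁻¹ 1 + CF13.nm α⁻¹ 0 = Q 1
            rw [hpq0', hQ1]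
            show 0 * 1 + 0 = 0
            ring
          · show pq α⁻¹ 0 * CF13.dn α⁻¹ 1 + CF13.dn α⁻¹ 0 = P 1
            rw [hpq0', hP1]
            show 0 * 0 + 1 = 1
            ring
        | (k+2) =>
          have h1 := ih (k+1) (by omega)
          have h2 := ih k (by omega)
          constructor
          · show pq α⁻¹ (k+1) * CF13.nm α⁻¹ (k+2) + CF13.nm α⁻¹ (k+1) = Q (k+2)
            rw [hpq' k, h1.1, h2.1, hQ k, ha k]
          · show pq α⁻¹ (k+1) * CF13.dn α⁻¹ (k+2) + CF13.dn α⁻¹ (k+1) = P (k+2)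
            rw [hpq' k, h1.2, h2.2, hP k, ha k]
    intro x y hx hy hco heq
    have hxR : (1:ℝ) ≤ (x:ℝ) := by exact_mod_cast hx
    have hyR : (1:ℝ) ≤ (y:ℝ) := by exact_mod_cast hy
    have hx0 : (0:ℝ) < (x:ℝ) := by linarith
    have hy0 : (0:ℝ) < (y:ℝ) := by linarith
    have hcoZ : IsCoprime (x:ℤ) (y:ℤ) := Nat.isCoprime_iff_coprime.mpr hco
    have heqR : (x:ℝ)^2 - (d:ℝ)*(y:ℝ)^2 = (m:ℝ) := by exact_mod_cast heq
    rcases lt_or_gt_of_ne hm with hmneg | hmpos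
    · -- m < 0 : use the continued fraction of α⁻¹
      have hmgt : -(m:ℝ) < α := by
        have h' : |(m:ℝ)| = -(m:ℝ) := abs_of_neg (by exact_mod_cast hmneg)
        rw [← h']; exact hmd
      have hid : ((y:ℝ)*α - x) * ((y:ℝ)*α + x) = -(m:ℝ) := by
        linear_combination (y:ℝ)^2 * hs2 - heqR
      have hmneg' : (0:ℝ) < -(m:ℝ) := by
        have : (m:ℝ) < 0 := by exact_mod_cast hmneg
        linarith
      have hsum : (0:ℝ) < (y:ℝ)*α + x := by nlinarith [mul_pos hy0 hαpos]
      have hdiff : (0:ℝ) < (y:ℝ)*α - x := by nlinarith [hid, hmneg', hsum]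
      have hkey : 2*(x:ℝ)*((y:ℝ)*α - x) < α := by
        have e1 : 2*(x:ℝ)*(-(m:ℝ)) < 2*(x:ℝ)*α := by nlinarith [hmgt, hx0]
        have e2 : (2*(x:ℝ)*((y:ℝ)*α - x)) * ((y:ℝ)*α + x) = 2*(x:ℝ)*(-(m:ℝ)) := by
          linear_combination 2*(x:ℝ)*hid
        have e3 : 2*(x:ℝ)*α ≤ α*((y:ℝ)*α + x) := by
          nlinarith [mul_nonneg (le_of_lt hαpos) (le_of_lt hdiff)]
        have e4 : (2*(x:ℝ)*((y:ℝ)*α - x)) * ((y:ℝ)*α + x) < α * ((y:ℝ)*α + x) := by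
          linarith
        exact lt_of_mul_lt_mul_right e4 (le_of_lt hsum)
      have happ' : |α⁻¹ - ((y:ℤ):ℝ)/((x:ℤ):ℝ)| < 1/(2*((x:ℤ):ℝ)^2) := by
        push_cast
        have h1 : α⁻¹ - (y:ℝ)/(x:ℝ) = -(((y:ℝ)*α - x)/((x:ℝ)*α)) := by
          field_simp
          ring
        rw [h1, abs_neg, abs_of_pos (by positivity)]
        rw [div_lt_div_iff₀ (by positivity) (by positivity)]
        nlinarith [mul_lt_mul_of_pos_left hkey hx0]
      obtain ⟨n, hn1, hye, hxe⟩ := CF13.legendre hirr' (y:ℤ) (x:ℤ)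
        (by exact_mod_cast hx) hcoZ.symm happ'
      rw [(hswap n).1] at hye
      rw [(hswap n).2] at hxe
      have hn2 : 2 ≤ n := by
        rcases Nat.lt_or_ge n 2 with h | h
        · interval_cases n
          rw [hQ1] at hye
          exfalso
          have : (0:ℤ) < (y:ℤ) := by exact_mod_cast hy
          omega
        · exact h
      refine ⟨n - 1, by omega, ?_, ?_, ?_⟩
      · rw [show n - 1 + 1 = n by omega]; exact hxe
      · rw [show n - 1 + 1 = n by omega]; exact hye
      · rw [← hPell (n-1), show n - 1 + 1 = n by omega, ← hxe, ← hye]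
        exact heq
    · -- m > 0
      have hmR : (0:ℝ) < (m:ℝ) := by exact_mod_cast hmpos
      have hmlt : (m:ℝ) < α := by
        have h' : |(m:ℝ)| = (m:ℝ) := abs_of_pos hmR
        rw [← h']; exact hmd
      have hid : ((x:ℝ) - (y:ℝ)*α) * ((x:ℝ) + (y:ℝ)*α) = (m:ℝ) := by
        linear_combination heqR - (y:ℝ)^2 * hs2
      have hsum : (0:ℝ) < (x:ℝ) + (y:ℝ)*α := by nlinarith [mul_pos hy0 hαpos]
      have hdiff : (0:ℝ) < (x:ℝ) - (y:ℝ)*α := by nlinarith [hid, hmR, hsum]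
      have hkey : 2*(y:ℝ)*((x:ℝ) - (y:ℝ)*α) < 1 := by
        have e1 : 2*(y:ℝ)*(m:ℝ) < 2*(y:ℝ)*α := by nlinarith [hmlt, hy0]
        have e2 : (2*(y:ℝ)*((x:ℝ) - (y:ℝ)*α)) * ((x:ℝ) + (y:ℝ)*α) = 2*(y:ℝ)*(m:ℝ) := by
          linear_combination 2*(y:ℝ)*hid
        have e3 : 2*(y:ℝ)*α < (x:ℝ) + (y:ℝ)*α := by linarith
        have e4 : (2*(y:ℝ)*((x:ℝ) - (y:ℝ)*α)) * ((x:ℝ) + (y:ℝ)*α) < 1 * ((x:ℝ) + (y:ℝ)*α) := by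
          linarith
        exact lt_of_mul_lt_mul_right e4 (le_of_lt hsum)
      have happ : |α - ((x:ℤ):ℝ)/((y:ℤ):ℝ)| < 1/(2*((y:ℤ):ℝ)^2) := by
        push_cast
        have h1 : α - (x:ℝ)/(y:ℝ) = -(((x:ℝ) - (y:ℝ)*α)/(y:ℝ)) := by
          field_simp
          ring
        rw [h1, abs_neg, abs_of_pos (by positivity)]
        rw [div_lt_div_iff₀ (by positivity) (by positivity)]
        nlinarith [mul_lt_mul_of_pos_left hkey hy0]
      obtain ⟨n, hn1, hxe, hye⟩ := CF13.legendre hirr (x:ℤ) (y:ℤ)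
        (by exact_mod_cast hy) hcoZ happ
      rw [← (hPQ (n+1)).1] at hxe
      rw [← (hPQ (n+1)).2] at hye
      refine ⟨n, hn1, hxe, hye, ?_⟩
      rw [← hPell n, ← hxe, ← hye]
      exact heq
  -- solutions ↔ suitable convergents
  have hsol : ∀ x y : ℕ, (0 < x ∧ 0 < y ∧ Nat.Coprime x y ∧
      (x:ℤ)^2 - (d:ℤ)*(y:ℤ)^2 = m) ↔
      ∃ j, 1 ≤ j ∧ (x:ℤ) = P (j+1) ∧ (y:ℤ) = Q (j+1) ∧ (-1:ℤ)^j * v j = m := by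
    intro x y
    constructor
    · rintro ⟨hx, hy, hco, heq⟩
      exact hforward x y hx hy hco heq
    · rintro ⟨j, hj1, hxP, hyQ, hval⟩
      have hx : 0 < x := by
        have h1 : (1:ℤ) ≤ (x:ℤ) := hxP ▸ hPpos j
        exact_mod_cast h1.trans_lt' zero_lt_one
      have hy : 0 < y := by
        have h1 : (1:ℤ) ≤ (y:ℤ) := hyQ ▸ hQpos j hj1
        exact_mod_cast h1.trans_lt' zero_lt_one
      refine ⟨hx, hy, ?_, ?_⟩
      · have hco : IsCoprime (x:ℤ) (y:ℤ) := by rw [hxP, hyQ]; exact hcopr j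
        exact Nat.isCoprime_iff_coprime.mp hco
      · rw [hxP, hyQ, hPell j, hval]
  -- index bookkeeping
  have hdecomp : ∀ j : ℕ, 1 ≤ j → (-1:ℤ)^j * v j = m →
      ((∃ N k : ℕ, 1 ≤ N ∧ N ≤ T ∧ (-1:ℤ)^N * v N = m ∧ j = N + 2*k*T) ∨
       (∃ M k : ℕ, 1 ≤ M ∧ M ≤ T ∧ (-1:ℤ)^M * v M = -m ∧ j = M + (2*k+1)*T)) := by
    intro j hj hval
    set r := (j - 1) % T + 1 with hr
    set s := (j - 1) / T with hsdef
    have hjrs : j = r + s * T := by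
      have hdm := Nat.div_add_mod (j-1) T
      rw [Nat.mul_comm s T]
      set c := T * s with hcdef
      omega
    have hr1 : 1 ≤ r := by omega
    have hrT : r ≤ T := by
      have := Nat.mod_lt (j - 1) (show 0 < T by omega)
      omega
    have hvj : v j = v r := by rw [hjrs]; exact hvperk s r hr1
    have hsign : ((-1:ℤ))^j = (-1)^r * (-1)^s := by
      rw [hjrs, pow_add, pow_mul]
      congr 1
      rcases Nat.even_or_odd s with hs | hs
      · rw [hs.neg_one_pow, one_pow]
      · rw [hs.neg_one_pow, hTodd.neg_one_pow]
    rw [hsign, hvj] at hval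
    rcases Nat.even_or_odd s with hs | hs
    · left
      have h1 : ((-1:ℤ))^s = 1 := hs.neg_one_pow
      obtain ⟨k, hk⟩ := hs
      refine ⟨r, k, hr1, hrT, ?_, by rw [hjrs, hk]; ring⟩
      rw [h1] at hval
      simpa using hval
    · right
      have h1 : ((-1:ℤ))^s = -1 := hs.neg_one_pow
      obtain ⟨k, hk⟩ := hs
      refine ⟨r, k, hr1, hrT, ?_, by rw [hjrs, hk]⟩
      rw [h1] at hval
      linear_combination -hval
  have hcomp1 : ∀ (N k : ℕ), 1 ≤ N → (-1:ℤ)^N * v N = m →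
      (-1:ℤ)^(N + 2*k*T) * v (N + 2*k*T) = m := by
    intro N k hN hval
    have hv' : v (N + 2*k*T) = v N := hvperk (2*k) N hN
    have hsign : ((-1:ℤ))^(N + 2*k*T) = (-1)^N := by
      rw [pow_add, (show Even (2*k*T) from ⟨k*T, by ring⟩).neg_one_pow, mul_one]
    rw [hsign, hv']
    exact hval
  have hcomp2 : ∀ (M k : ℕ), 1 ≤ M → (-1:ℤ)^M * v M = -m →
      (-1:ℤ)^(M + (2*k+1)*T) * v (M + (2*k+1)*T) = m := by
    intro M k hM hval
    have hv' : v (M + (2*k+1)*T) = v M := hvperk (2*k+1) M hM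
    have hsign : ((-1:ℤ))^(M + (2*k+1)*T) = -((-1:ℤ))^M := by
      rw [pow_add, ((odd_two_mul_add_one k).mul hTodd).neg_one_pow]
      ring
    rw [hsign, hv']
    linear_combination -hval
  constructor
  · constructor
    · rintro ⟨x, y, hx, hy, hco, heq⟩
      obtain ⟨j, hj1, hxP, hyQ, hval⟩ := hforward x y hx hy hco heq
      rcases hdecomp j hj1 hval with ⟨N, k, hN1, hNT, hNval, hjeq⟩ |
        ⟨M, k, hM1, hMT, hMval, hjeq⟩
      · exact ⟨N, hN1, hNT, Or.inl hNval⟩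
      · exact ⟨M, hM1, hMT, Or.inr hMval⟩
    · rintro ⟨j, hj1, hjT, hval | hval⟩
      · have hPt : ((P (j+1)).toNat : ℤ) = P (j+1) :=
          Int.toNat_of_nonneg (by linarith [hPpos j])
        have hQt : ((Q (j+1)).toNat : ℤ) = Q (j+1) :=
          Int.toNat_of_nonneg (by linarith [hQpos j hj1])
        exact ⟨_, _, (hsol _ _).mpr ⟨j, hj1, hPt, hQt, hval⟩⟩
      · have hj' : (-1:ℤ)^(j+T) * v (j+T) = m := by
          rw [hvper j hj1, pow_add, hTodd.neg_one_pow]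
          linear_combination -hval
        have hj1' : 1 ≤ j + T := by omega
        have hPt : ((P (j+T+1)).toNat : ℤ) = P (j+T+1) :=
          Int.toNat_of_nonneg (by linarith [hPpos (j+T)])
        have hQt : ((Q (j+T+1)).toNat : ℤ) = Q (j+T+1) :=
          Int.toNat_of_nonneg (by linarith [hQpos (j+T) hj1'])
        exact ⟨_, _, (hsol _ _).mpr ⟨j+T, hj1', hPt, hQt, hj'⟩⟩
  · intro _ x y
    rw [hsol x y]
    constructor
    · rintro ⟨j, hj1, hxP, hyQ, hval⟩
      rcases hdecomp j hj1 hval with ⟨N, k, hN1, hNT, hNval, hjeq⟩ |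
        ⟨M, k, hM1, hMT, hMval, hjeq⟩
      · exact Or.inl ⟨N, k, hN1, hNT, hNval,
          by rw [← hjeq]; exact hxP, by rw [← hjeq]; exact hyQ⟩
      · exact Or.inr ⟨M, k, hM1, hMT, hMval,
          by rw [← hjeq]; exact hxP, by rw [← hjeq]; exact hyQ⟩
    · rintro (⟨N, k, hN1, hNT, hNval, hxP, hyQ⟩ | ⟨M, k, hM1, hMT, hMval, hxP, hyQ⟩)
      · exact ⟨N + 2*k*T, by omega, hxP, hyQ, hcomp1 N k hN1 hNval⟩
      · exact ⟨M + (2*k+1)*T, by omega, hxP, hyQ, hcomp2 M k hM1 hMval⟩
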